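/- For a numerical semigroup S ≠ ℕ and a positive integer d, depth(S/d) ≤ depth(S), where depth(S) = ⌊F(S)/m(S)⌋ + 1. -/
import Mathlib


/-- A numerical semigroup: a submonoid of (ℕ,+) with finite complement. -/
def IsNumericalSemigroup (S : Set ℕ) : Prop :=
  0 ∈ S ∧ (∀ a ∈ S, ∀ b ∈ S, a + b ∈ S) ∧ Sᶜ.Finite

/-- The quotient S/d = {x ∈ ℕ : d*x ∈ S}. -/
def NumQuot (S : Set ℕ) (d : ℕ) : Set ℕ := {x | d * x ∈ S}

/-- The Frobenius number of S (for S ≠ ℕ): the maximum of the complement. -/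
noncomputable def frob (S : Set ℕ) : ℕ := sSup Sᶜ

/-- The multiplicity of S: the least positive element. -/
noncomputable def mult (S : Set ℕ) : ℕ := sInf (S \ {0})

/-- T is an arithmetic extension of S if T = {x : d₁x,...,dₙx ∈ S} for some
positive integers d₁,...,dₙ. -/
def IsArithmeticExtension (S T : Set ℕ) : Prop :=
  ∃ D : Finset ℕ, D.Nonempty ∧ (∀ d ∈ D, 0 < d) ∧ T = {x | ∀ d ∈ D, d * x ∈ S}

/-- An arithmetic variety: a nonempty family of numerical semigroups closed under
pairwise intersections and arithmetic extensions. -/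
def IsArithmeticVariety (𝒜 : Set (Set ℕ)) : Prop :=
  𝒜.Nonempty ∧ (∀ S ∈ 𝒜, IsNumericalSemigroup S) ∧
    (∀ S ∈ 𝒜, ∀ T ∈ 𝒜, S ∩ T ∈ 𝒜) ∧
    (∀ S ∈ 𝒜, ∀ T : Set ℕ, IsArithmeticExtension S T → T ∈ 𝒜)

open Classical in
/-- The depth of a numerical semigroup: ⌊F(S)/m(S)⌋ + 1, with depth(ℕ) = 0. -/
noncomputable def depth (S : Set ℕ) : ℕ :=
  if S = Set.univ then 0 else frob S / mult S + 1

theorem depth_quot_le (S : Set ℕ) (hS : IsNumericalSemigroup S)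
    (hS' : S ≠ Set.univ) (d : ℕ) (hd : 0 < d) :
    depth (NumQuot S d) ≤ depth S := by
  obtain ⟨h0, hadd, hfin⟩ := hS
  have hcne : Sᶜ.Nonempty := by
    rw [Set.nonempty_compl]; exact hS'
  have hbdd : BddAbove Sᶜ := hfin.bddAbove
  -- everything above frob S is in S
  have hgt : ∀ x, frob S < x → x ∈ S := by
    intro x hx
    by_contra hxS
    exact absurd (le_csSup hbdd hxS) (not_le.mpr hx)
  have hle : ∀ x, x ∉ S → x ≤ frob S := fun x hx => le_csSup hbdd hx
  set F := frob S with hF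
  set m := mult S with hm
  -- m ∈ S \ {0}
  have hSm : (S \ {0}).Nonempty := ⟨F + 1, hgt _ (Nat.lt_succ_self _), by simp⟩
  have hmem : m ∈ S \ {0} := Nat.sInf_mem hSm
  have hmpos : 0 < m := Nat.pos_of_ne_zero (by simpa using hmem.2)
  have hFm : F < (F / m + 1) * m := by
    have h1 := Nat.div_add_mod F m
    have h2 := Nat.mod_lt F hmpos
    nlinarith [h1, h2]
  unfold depth
  rw [if_neg hS']
  by_cases hQ : NumQuot S d = Set.univ
  · simp [hQ]
  rw [if_neg hQ]
  set Q := NumQuot S d with hQdef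
  have hQcne : Qᶜ.Nonempty := by rw [Set.nonempty_compl]; exact hQ
  have hQbdd : BddAbove Qᶜ := by
    refine ⟨F, fun x hx => ?_⟩
    have hdx : d * x ∉ S := hx
    have := hle _ hdx
    calc x ≤ d * x := Nat.le_mul_of_pos_left x hd
    _ ≤ F := this
  have hF'mem : frob Q ∈ Qᶜ := Nat.sSup_mem hQcne hQbdd
  set F' := frob Q with hF'
  -- multiplicity of Q
  have hQne : (Q \ {0}).Nonempty := by
    refine ⟨F + 1, ?_, by simp⟩
    show d * (F + 1) ∈ S
    refine hgt _ ?_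
    calc F < F + 1 := Nat.lt_succ_self _
    _ ≤ d * (F + 1) := Nat.le_mul_of_pos_left _ hd
  have hm'mem : mult Q ∈ Q \ {0} := Nat.sInf_mem hQne
  set m' := mult Q with hm'
  have hm'pos : 0 < m' := Nat.pos_of_ne_zero (by simpa using hm'mem.2)
  have hdm' : d * m' ∈ S := hm'mem.1
  have hdm'm : m ≤ d * m' := by
    refine Nat.sInf_le ⟨hdm', ?_⟩
    simpa using Nat.mul_ne_zero hd.ne' hm'pos.ne'
  -- key: F' < (F/m + 1) * m'
  have hkey : F' < (F / m + 1) * m' := by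
    by_contra h
    push_neg at h
    have : d * F' ∈ S := by
      refine hgt _ ?_
      calc F < (F / m + 1) * m := hFm
      _ ≤ (F / m + 1) * (d * m') := Nat.mul_le_mul_left _ hdm'm
      _ = (F / m + 1) * m' * d := by ring
      _ ≤ F' * d := Nat.mul_le_mul_right _ h
      _ = d * F' := Nat.mul_comm _ _
    exact hF'mem this
  have hlt : F' / m' < F / m + 1 := Nat.div_lt_of_lt_mul (by linarith [hkey])
  show F' / m' + 1 ≤ F / m + 1
  omega
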